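/- In the Plackett–Luce model with distinct values v_1 > v_2 > ... > v_n > 0 and noise scales 0 < α < β, for any set S of items not containing items i and k (v_i > v_k): if decreasing the noise scale from β to α strictly decreases the probability that item i is ranked above all items in S ∪ {k} (i.e., exp(v_i/β)/(S_β + exp(v_i/β) + exp(v_k/β)) > exp(v_i/α)/(S_α + exp(v_i/α) + exp(v_k/α)) where S_t = Σ_{ℓ∈S} exp(v_ℓ/t)), then it also strictly decreases the corresponding probability for item k. Concretely, the hypothesis implies S_α/S_β > exp(v_i(1/α − 1/β)) ≥ exp(v_k(1/α − 1/β)), which yields the conclusion. -/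
import Mathlib


open Finset

/-- Plackett–Luce majorization. With positive values
`v_i > v_k > 0`, noise scales `0 < α < β`, and a nonempty finite set `S` of
other items with values `w`, write `S_t = Σ_{ℓ∈S} e^{w ℓ/t}`.  If decreasing
the noise scale from `β` to `α` strictly decreases the probability that item
`i` is ranked above all items of `S ∪ {k}`, i.e.
`e^{v_i/β}/(S_β + e^{v_i/β} + e^{v_k/β}) > e^{v_i/α}/(S_α + e^{v_i/α} + e^{v_k/α})`,
then `S_α/S_β > e^{v_i(1/α − 1/β)} ≥ e^{v_k(1/α − 1/β)}`, and the
corresponding top-choice probability for item `k` also strictly decreases. -/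
theorem stmt18
    {ι : Type*} (S : Finset ι) (hS : S.Nonempty) (w : ι → ℝ)
    (vi vk α β : ℝ)
    (hα : 0 < α) (hαβ : α < β)
    (hvk : 0 < vk) (hvik : vk < vi)
    (hyp : Real.exp (vi / α) /
        ((∑ ℓ ∈ S, Real.exp (w ℓ / α)) + Real.exp (vi / α) + Real.exp (vk / α)) <
      Real.exp (vi / β) /
        ((∑ ℓ ∈ S, Real.exp (w ℓ / β)) + Real.exp (vi / β) + Real.exp (vk / β))) :
    Real.exp (vi * (1 / α - 1 / β)) <
        (∑ ℓ ∈ S, Real.exp (w ℓ / α)) / (∑ ℓ ∈ S, Real.exp (w ℓ / β)) ∧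
      Real.exp (vk * (1 / α - 1 / β)) ≤ Real.exp (vi * (1 / α - 1 / β)) ∧
      Real.exp (vk / α) /
          ((∑ ℓ ∈ S, Real.exp (w ℓ / α)) + Real.exp (vi / α) + Real.exp (vk / α)) <
        Real.exp (vk / β) /
          ((∑ ℓ ∈ S, Real.exp (w ℓ / β)) + Real.exp (vi / β) + Real.exp (vk / β)) := by
  have hβ : 0 < β := hα.trans hαβ
  set A := ∑ ℓ ∈ S, Real.exp (w ℓ / α) with hAdef
  set B := ∑ ℓ ∈ S, Real.exp (w ℓ / β) with hBdef
  have hA : 0 < A := Finset.sum_pos (fun ℓ _ => Real.exp_pos _) hS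
  have hB : 0 < B := Finset.sum_pos (fun ℓ _ => Real.exp_pos _) hS
  set ei := Real.exp (vi / α) with heidef
  set Ei := Real.exp (vi / β) with hEidef
  set ek := Real.exp (vk / α) with hekdef
  set Ek := Real.exp (vk / β) with hEkdef
  have hei : 0 < ei := Real.exp_pos _
  have hEi : 0 < Ei := Real.exp_pos _
  have hek : 0 < ek := Real.exp_pos _
  have hEk : 0 < Ek := Real.exp_pos _
  set Ri := Real.exp (vi * (1 / α - 1 / β)) with hRidef
  set Rk := Real.exp (vk * (1 / α - 1 / β)) with hRkdef
  have hRi : ei = Ei * Ri := by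
    rw [hRidef, hEidef, heidef, ← Real.exp_add]
    congr 1
    field_simp
    ring
  have hRk : ek = Ek * Rk := by
    rw [hRkdef, hEkdef, hekdef, ← Real.exp_add]
    congr 1
    field_simp
    ring
  have hRkRi : Rk < Ri := by
    apply Real.exp_lt_exp.mpr
    have hpos : 0 < 1 / α - 1 / β := by
      have : 1 / β < 1 / α := one_div_lt_one_div_of_lt hα hαβ
      linarith
    exact mul_lt_mul_of_pos_right hvik hpos
  have hd1 : 0 < A + ei + ek := by positivity
  have hd2 : 0 < B + Ei + Ek := by positivity
  have hyp' : ei * (B + Ei + Ek) < Ei * (A + ei + ek) :=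
    (div_lt_div_iff₀ hd1 hd2).mp hyp
  have hkey : Ri * B < A := by nlinarith [mul_pos hEi hEk]
  refine ⟨(lt_div_iff₀ hB).mpr hkey, Real.exp_le_exp.mpr ?_, ?_⟩
  · exact (Real.exp_lt_exp.mp hRkRi).le
  rw [div_lt_div_iff₀ hd1 hd2]
  have h1 : ek * B < Ek * A := by
    nlinarith [mul_lt_mul_of_pos_left hkey hEk,
      mul_lt_mul_of_pos_left (mul_lt_mul_of_pos_right hRkRi hB) hEk]
  have h2 : ek * Ei ≤ Ek * ei := by
    nlinarith [mul_lt_mul_of_pos_left hRkRi (mul_pos hEk hEi)]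
  nlinarith
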